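/- Let ψ1 on ℂ^{d1}⊗ℂ^{d1} and ψ2 on ℂ^{d2}⊗ℂ^{d2} be pure states in Schmidt form with Schmidt coefficients forming the diagonal matrices μ1 and μ2, let ε ∈ ℝ, and define the witness W_ε(ψ1,ψ2) = P_{ψ1} ⊠ (I − P_{ψ2}) + (I − P_{ψ1}) ⊠ P_{ψ2} − ε · P_{ψ1} ⊠ P_{ψ2}. For arbitrary complex d1×d2 matrices α and β let a ∈ ℂ^{d1·d2} and b ∈ ℂ^{d1·d2} be the vectors with components a[(i,j)] = α_{ij} and b[(i,j)] = β_{ij}, and let a⊗b be the product vector with components (a⊗b)[((i1,i2),(j1,j2))] = α_{i1 i2} β_{j1 j2}. Then ⟨a⊗b, W_ε(ψ1,ψ2) (a⊗b)⟩ = Tr((βᵀ μ1 α)ᴴ (βᵀ μ1 α)) + Tr((α μ2 βᵀ)ᴴ (α μ2 βᵀ)) − (2+ε)·|Tr(α μ2 βᵀ μ1)|². -/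

import Mathlib

open Matrix BigOperators
open scoped ComplexOrder

/-- A pure state in Schmidt form with Schmidt coefficients `μ`:
`ψ[(i,j)] = μ_i δ_{ij}`. -/
noncomputable def schmidtVec {d : ℕ} (μ : Fin d → ℝ) : Fin d × Fin d → ℂ :=
  fun p => if p.1 = p.2 then (μ p.1 : ℂ) else 0

/-- Rank-one projection onto the vector `v`. -/
noncomputable def projVec {n : Type*} (v : n → ℂ) : Matrix n n ℂ :=
  Matrix.of fun p q => v p * star (v q)

/-- Cut-respecting tensor product `σ ⊠ τ` of matrices on `ℂ^{d1}⊗ℂ^{d1}` and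
`ℂ^{d2}⊗ℂ^{d2}`: the A side collects the first components, the B side the second. -/
def ctens {d1 d2 : ℕ} (σ : Matrix (Fin d1 × Fin d1) (Fin d1 × Fin d1) ℂ)
    (τ : Matrix (Fin d2 × Fin d2) (Fin d2 × Fin d2) ℂ) :
    Matrix ((Fin d1 × Fin d2) × (Fin d1 × Fin d2)) ((Fin d1 × Fin d2) × (Fin d1 × Fin d2)) ℂ :=
  Matrix.of fun p q => σ (p.1.1, p.2.1) (q.1.1, q.2.1) * τ (p.1.2, p.2.2) (q.1.2, q.2.2)

/-- The product vector `a ⊗ b`. -/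
def prodVec {d1 d2 : ℕ} (a b : Fin d1 × Fin d2 → ℂ) :
    (Fin d1 × Fin d2) × (Fin d1 × Fin d2) → ℂ :=
  fun p => a p.1 * b p.2

/-- The canonical witness
`W_ε(ψ1,ψ2) = P_{ψ1} ⊠ (I−P_{ψ2}) + (I−P_{ψ1}) ⊠ P_{ψ2} − ε P_{ψ1} ⊠ P_{ψ2}`. -/
noncomputable def witnessW {d1 d2 : ℕ} (μ1 : Fin d1 → ℝ) (μ2 : Fin d2 → ℝ) (ε : ℝ) :
    Matrix ((Fin d1 × Fin d2) × (Fin d1 × Fin d2)) ((Fin d1 × Fin d2) × (Fin d1 × Fin d2)) ℂ :=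
  ctens (projVec (schmidtVec μ1)) (1 - projVec (schmidtVec μ2))
    + ctens (1 - projVec (schmidtVec μ1)) (projVec (schmidtVec μ2))
    - ε • ctens (projVec (schmidtVec μ1)) (projVec (schmidtVec μ2))

/-- The diagonal matrix of Schmidt coefficients, as a complex matrix. -/
noncomputable def diagC {d : ℕ} (μ : Fin d → ℝ) : Matrix (Fin d) (Fin d) ℂ :=
  Matrix.diagonal fun i => (μ i : ℂ)

lemma aux_exp1 {d1 d2 : ℕ} (μ1 : Fin d1 → ℝ) (α β : Matrix (Fin d1) (Fin d2) ℂ) :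
    star (prodVec (fun p => α p.1 p.2) (fun p => β p.1 p.2)) ⬝ᵥ
      (ctens (projVec (schmidtVec μ1)) 1).mulVec
        (prodVec (fun p => α p.1 p.2) (fun p => β p.1 p.2))
    = ∑ i2, ∑ j2, (starRingEnd ℂ) (∑ i, (μ1 i : ℂ) * α i i2 * β i j2) *
        (∑ i, (μ1 i : ℂ) * α i i2 * β i j2) := by
  simp only [dotProduct, mulVec, ctens, projVec, schmidtVec, prodVec, Matrix.of_apply,
    Matrix.one_apply, Pi.star_apply, Fintype.sum_prod_type]
  simp [Finset.mul_sum, Finset.sum_mul, mul_ite, ite_mul, mul_zero, zero_mul, Prod.ext_iff,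
    apply_ite (starRingEnd ℂ), Complex.conj_ofReal, ite_and, star_mul', mul_comm, mul_assoc,
    mul_left_comm]
  rw [Finset.sum_comm]
  refine Finset.sum_congr rfl fun x1 _ => Finset.sum_comm

lemma aux_exp2 {d1 d2 : ℕ} (μ2 : Fin d2 → ℝ) (α β : Matrix (Fin d1) (Fin d2) ℂ) :
    star (prodVec (fun p => α p.1 p.2) (fun p => β p.1 p.2)) ⬝ᵥ
      (ctens 1 (projVec (schmidtVec μ2))).mulVec
        (prodVec (fun p => α p.1 p.2) (fun p => β p.1 p.2))
    = ∑ i1, ∑ j1, (starRingEnd ℂ) (∑ k, (μ2 k : ℂ) * α i1 k * β j1 k) *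
        (∑ k, (μ2 k : ℂ) * α i1 k * β j1 k) := by
  simp only [dotProduct, mulVec, ctens, projVec, schmidtVec, prodVec, Matrix.of_apply,
    Matrix.one_apply, Pi.star_apply, Fintype.sum_prod_type]
  simp [Finset.mul_sum, Finset.sum_mul, mul_ite, ite_mul, mul_zero, zero_mul, Prod.ext_iff,
    apply_ite (starRingEnd ℂ), Complex.conj_ofReal, ite_and, star_mul', mul_comm, mul_assoc,
    mul_left_comm]
  exact Finset.sum_congr rfl fun _ _ => Finset.sum_comm

lemma aux_exp3 {d1 d2 : ℕ} (μ1 : Fin d1 → ℝ) (μ2 : Fin d2 → ℝ)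
    (α β : Matrix (Fin d1) (Fin d2) ℂ) :
    star (prodVec (fun p => α p.1 p.2) (fun p => β p.1 p.2)) ⬝ᵥ
      (ctens (projVec (schmidtVec μ1)) (projVec (schmidtVec μ2))).mulVec
        (prodVec (fun p => α p.1 p.2) (fun p => β p.1 p.2))
    = (starRingEnd ℂ) (∑ i, ∑ k, (μ1 i : ℂ) * (μ2 k : ℂ) * α i k * β i k) *
        (∑ i, ∑ k, (μ1 i : ℂ) * (μ2 k : ℂ) * α i k * β i k) := by
  simp only [dotProduct, mulVec, ctens, projVec, schmidtVec, prodVec, Matrix.of_apply,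
    Matrix.one_apply, Pi.star_apply, Fintype.sum_prod_type]
  simp [Finset.mul_sum, Finset.sum_mul, mul_ite, ite_mul, mul_zero, zero_mul, Prod.ext_iff,
    apply_ite (starRingEnd ℂ), Complex.conj_ofReal, ite_and, star_mul', mul_comm, mul_assoc,
    mul_left_comm]

lemma aux_decomp {d1 d2 : ℕ} (μ1 : Fin d1 → ℝ) (μ2 : Fin d2 → ℝ) (ε : ℝ) :
    witnessW μ1 μ2 ε
      = ctens (projVec (schmidtVec μ1)) 1 + ctens 1 (projVec (schmidtVec μ2))
        - ((2 : ℂ) + (ε : ℂ)) • ctens (projVec (schmidtVec μ1)) (projVec (schmidtVec μ2)) := by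
  ext p q
  simp [witnessW, ctens, Matrix.sub_apply, Matrix.add_apply, Matrix.smul_apply,
    Complex.real_smul, smul_eq_mul]
  ring

set_option maxHeartbeats 1600000 in
theorem witness_expectation_on_product_vectors {d1 d2 : ℕ}
    (μ1 : Fin d1 → ℝ) (μ2 : Fin d2 → ℝ)
    (h1pos : ∀ i, 0 ≤ μ1 i) (h1norm : ∑ i, μ1 i ^ 2 = 1)
    (h2pos : ∀ i, 0 ≤ μ2 i) (h2norm : ∑ i, μ2 i ^ 2 = 1)
    (ε : ℝ) (α β : Matrix (Fin d1) (Fin d2) ℂ) :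
    star (prodVec (fun p => α p.1 p.2) (fun p => β p.1 p.2)) ⬝ᵥ
        (witnessW μ1 μ2 ε).mulVec
          (prodVec (fun p => α p.1 p.2) (fun p => β p.1 p.2))
      = ((βᵀ * diagC μ1 * α)ᴴ * (βᵀ * diagC μ1 * α)).trace
        + ((α * diagC μ2 * βᵀ)ᴴ * (α * diagC μ2 * βᵀ)).trace
        - (((2 + ε) * ‖(α * diagC μ2 * βᵀ * diagC μ1).trace‖ ^ 2 : ℝ) : ℂ) := by
  have hC : (α * diagC μ2 * βᵀ * diagC μ1).trace
      = ∑ i, ∑ k, (μ1 i : ℂ) * (μ2 k : ℂ) * α i k * β i k := by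
    simp [Matrix.trace, Matrix.mul_apply, diagC, Matrix.diagonal, Matrix.transpose_apply,
      Finset.sum_mul, Finset.mul_sum, mul_comm, mul_assoc, mul_left_comm]
  have hR1 : ((βᵀ * diagC μ1 * α)ᴴ * (βᵀ * diagC μ1 * α)).trace
      = ∑ i2, ∑ j2, (starRingEnd ℂ) (∑ i, (μ1 i : ℂ) * α i i2 * β i j2) *
          (∑ i, (μ1 i : ℂ) * α i i2 * β i j2) := by
    simp [Matrix.trace, Matrix.mul_apply, Matrix.conjTranspose_apply, diagC, Matrix.diagonal,
      Matrix.transpose_apply, Finset.sum_mul, Finset.mul_sum, Complex.conj_ofReal,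
      apply_ite (starRingEnd ℂ), mul_ite, ite_mul, mul_zero, zero_mul,
      mul_comm, mul_assoc, mul_left_comm]
  have hR2 : ((α * diagC μ2 * βᵀ)ᴴ * (α * diagC μ2 * βᵀ)).trace
      = ∑ i1, ∑ j1, (starRingEnd ℂ) (∑ k, (μ2 k : ℂ) * α i1 k * β j1 k) *
          (∑ k, (μ2 k : ℂ) * α i1 k * β j1 k) := by
    simp [Matrix.trace, Matrix.mul_apply, Matrix.conjTranspose_apply, diagC, Matrix.diagonal,
      Matrix.transpose_apply, Finset.sum_mul, Finset.mul_sum, Complex.conj_ofReal,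
      apply_ite (starRingEnd ℂ), mul_ite, ite_mul, mul_zero, zero_mul,
      mul_comm, mul_assoc, mul_left_comm]
    exact Finset.sum_comm
  have hnorm : ∀ z : ℂ, ((‖z‖ : ℂ)) ^ 2 = (starRingEnd ℂ) z * z := by
    intro z
    rw [← Complex.ofReal_pow, ← Complex.normSq_eq_norm_sq, mul_comm,
      Complex.mul_conj]
  rw [aux_decomp, Matrix.sub_mulVec, Matrix.add_mulVec, Matrix.smul_mulVec,
    dotProduct_sub, dotProduct_add, dotProduct_smul, aux_exp1, aux_exp2, aux_exp3,
    hR1, hR2, hC]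
  push_cast
  rw [hnorm, smul_eq_mul]
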